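/- arXiv:1806.09462 — 5 statements merged into one kernel-verified Lean document; each statement's English description precedes it below -/
import Mathlib

section
/- Define T₁₂ = α T₁ + (1−α) T₂ + γ|u₁−u₂|² and T₂₁ = [ (1/3) ε m₁ (1−δ)( (m₁/m₂) ε (δ−1) + δ + 1 ) − ε γ ] |u₁−u₂|² + ε(1−α) T₁ + (1 − ε(1−α)) T₂, with ν₁₂ = ε ν₂₁, u₁₂ = δ u₁ + (1−δ) u₂, u₂₁ = u₂ − (m₁/m₂) ε (1−δ)(u₂−u₁). Then the total energy flux vanishes: ε ν₂₁ n₁ n₂ [ (m₁/2)(|u₁₂|² − |u₁|²) + (3/2)(T₁₂ − T₁) ] + ν₂₁ n₁ n₂ [ (m₂/2)(|u₂₁|² − |u₂|²) + (3/2)(T₂₁ − T₂) ] = 0. -/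
open scoped RealInnerProductSpace

theorem total_energy_flux_vanishes
    (m₁ m₂ n₁ n₂ ν₂₁ ε α γ δ T₁ T₂ : ℝ)
    (hm₁ : 0 < m₁) (hm₂ : 0 < m₂) (hn₁ : 0 < n₁) (hn₂ : 0 < n₂)
    (hν : 0 < ν₂₁) (hε : 0 < ε) (hε1 : ε ≤ 1)
    (hα0 : 0 ≤ α) (hα1 : α ≤ 1) (hγ : 0 ≤ γ)
    (hT₁ : 0 < T₁) (hT₂ : 0 < T₂)
    (u₁ u₂ : EuclideanSpace ℝ (Fin 3))
    (ν₁₂ : ℝ) (hν₁₂ : ν₁₂ = ε * ν₂₁)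
    (u₁₂ u₂₁ : EuclideanSpace ℝ (Fin 3))
    (hu₁₂ : u₁₂ = δ • u₁ + (1 - δ) • u₂)
    (hu₂₁ : u₂₁ = u₂ - ((m₁ / m₂) * ε * (1 - δ)) • (u₂ - u₁))
    (T₁₂ T₂₁ : ℝ)
    (hT₁₂ : T₁₂ = α * T₁ + (1 - α) * T₂ + γ * ‖u₁ - u₂‖^2)
    (hT₂₁ : T₂₁ = ((1/3) * ε * m₁ * (1 - δ) * ((m₁ / m₂) * ε * (δ - 1) + δ + 1) - ε * γ)
        * ‖u₁ - u₂‖^2 + ε * (1 - α) * T₁ + (1 - ε * (1 - α)) * T₂) :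
    ε * ν₂₁ * n₁ * n₂ * ((m₁ / 2) * (‖u₁₂‖^2 - ‖u₁‖^2) + (3/2) * (T₁₂ - T₁)) +
      ν₂₁ * n₁ * n₂ * ((m₂ / 2) * (‖u₂₁‖^2 - ‖u₂‖^2) + (3/2) * (T₂₁ - T₂)) = 0 := by
  subst hT₁₂ hT₂₁ hu₁₂ hu₂₁
  simp only [← real_inner_self_eq_norm_sq, inner_add_add_self, inner_sub_sub_self, inner_sub_left, inner_sub_right, inner_add_left, inner_add_right,
    inner_smul_left, inner_smul_right, real_inner_comm u₂ u₁, RCLike.ofReal_real_eq_id, id, conj_trivial]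
  have hm₂' : m₂ ≠ 0 := hm₂.ne'
  generalize (inner ℝ u₁ u₁ : ℝ) = a
  generalize (inner ℝ u₂ u₂ : ℝ) = b
  generalize (inner ℝ u₁ u₂ : ℝ) = c
  field_simp
  ring
end

section
/- Under the assumptions 0 < ε ≤ 1, 0 ≤ α ≤ 1, γ ≥ 0, T₁, T₂ > 0, and 0 ≤ γ ≤ (m₁/3)(1−δ)[(1 + (m₁/m₂)ε)δ + 1 − (m₁/m₂)ε], the interspecies temperatures satisfy ε ln T₁₂ + ln T₂₁ ≥ ε ln T₁ + ln T₂, where T₁₂ = α T₁ + (1−α) T₂ + γ|u₁−u₂|² and T₂₁ = [ (1/3) ε m₁ (1−δ)( (m₁/m₂) ε (δ−1) + δ + 1 ) − ε γ ]|u₁−u₂|² + ε(1−α) T₁ + (1 − ε(1−α)) T₂. -/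
lemma log_convex_aux (a x y : ℝ) (ha0 : 0 ≤ a) (ha1 : a ≤ 1)
    (hx : 0 < x) (hy : 0 < y) :
    a * Real.log x + (1 - a) * Real.log y ≤ Real.log (a * x + (1 - a) * y) := by
  have hpos : 0 < a * x + (1 - a) * y := by
    rcases le_total x y with h | h
    · nlinarith
    · nlinarith
  have hgm : x ^ a * y ^ (1 - a) ≤ a * x + (1 - a) * y :=
    Real.geom_mean_le_arith_mean2_weighted ha0 (by linarith) hx.le hy.le (by ring)
  have hlog : Real.log (x ^ a * y ^ (1 - a)) = a * Real.log x + (1 - a) * Real.log y := by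
    rw [Real.log_mul (by positivity) (by positivity), Real.log_rpow hx, Real.log_rpow hy]
  calc a * Real.log x + (1 - a) * Real.log y = Real.log (x ^ a * y ^ (1 - a)) := hlog.symm
    _ ≤ Real.log (a * x + (1 - a) * y) := Real.log_le_log (by positivity) hgm

theorem log_temperature_inequality
    (m₁ m₂ ε α γ δ T₁ T₂ : ℝ)
    (hm₁ : 0 < m₁) (hm₂ : 0 < m₂)
    (hε : 0 < ε) (hε1 : ε ≤ 1)
    (hα0 : 0 ≤ α) (hα1 : α ≤ 1)
    (hγ0 : 0 ≤ γ)
    (hγ : γ ≤ (m₁ / 3) * (1 - δ) * ((1 + (m₁ / m₂) * ε) * δ + 1 - (m₁ / m₂) * ε))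
    (hT₁ : 0 < T₁) (hT₂ : 0 < T₂)
    (u₁ u₂ : EuclideanSpace ℝ (Fin 3))
    (T₁₂ T₂₁ : ℝ)
    (hT₁₂ : T₁₂ = α * T₁ + (1 - α) * T₂ + γ * ‖u₁ - u₂‖^2)
    (hT₂₁ : T₂₁ = ((1/3) * ε * m₁ * (1 - δ) * ((m₁ / m₂) * ε * (δ - 1) + δ + 1) - ε * γ)
        * ‖u₁ - u₂‖^2 + ε * (1 - α) * T₁ + (1 - ε * (1 - α)) * T₂) :
    ε * Real.log T₁ + Real.log T₂ ≤ ε * Real.log T₁₂ + Real.log T₂₁ := by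
  set s := ‖u₁ - u₂‖ ^ 2 with hs
  have hsnn : 0 ≤ s := sq_nonneg _
  have hb0 : 0 ≤ ε * (1 - α) := mul_nonneg hε.le (by linarith)
  have hb1 : ε * (1 - α) ≤ 1 := by nlinarith
  have hcoef : 0 ≤ (1/3) * ε * m₁ * (1 - δ) * ((m₁ / m₂) * ε * (δ - 1) + δ + 1) - ε * γ := by
    have h := mul_le_mul_of_nonneg_left hγ hε.le
    have key : ε * ((m₁ / 3) * (1 - δ) * ((1 + (m₁ / m₂) * ε) * δ + 1 - (m₁ / m₂) * ε))
        = (1/3) * ε * m₁ * (1 - δ) * ((m₁ / m₂) * ε * (δ - 1) + δ + 1) := by ring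
    linarith [key ▸ h]
  have h1 : α * Real.log T₁ + (1 - α) * Real.log T₂ ≤ Real.log T₁₂ := by
    have hApos : 0 < α * T₁ + (1 - α) * T₂ := by
      rcases le_total T₁ T₂ with h | h
      · nlinarith
      · nlinarith
    calc α * Real.log T₁ + (1 - α) * Real.log T₂
        ≤ Real.log (α * T₁ + (1 - α) * T₂) := log_convex_aux α T₁ T₂ hα0 hα1 hT₁ hT₂
      _ ≤ Real.log T₁₂ := by
          apply Real.log_le_log hApos
          rw [hT₁₂]
          linarith [mul_nonneg hγ0 hsnn]
  have h2 : ε * (1 - α) * Real.log T₁ + (1 - ε * (1 - α)) * Real.log T₂ ≤ Real.log T₂₁ := by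
    have hBpos : 0 < ε * (1 - α) * T₁ + (1 - ε * (1 - α)) * T₂ := by
      rcases le_total T₁ T₂ with h | h
      · nlinarith
      · nlinarith
    calc ε * (1 - α) * Real.log T₁ + (1 - ε * (1 - α)) * Real.log T₂
        ≤ Real.log (ε * (1 - α) * T₁ + (1 - ε * (1 - α)) * T₂) :=
          log_convex_aux (ε * (1 - α)) T₁ T₂ hb0 hb1 hT₁ hT₂
      _ ≤ Real.log T₂₁ := by
          apply Real.log_le_log hBpos
          rw [hT₂₁]
          linarith [mul_nonneg hcoef hsnn]
  have h1' := mul_le_mul_of_nonneg_left h1 hε.le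
  linarith [h1', h2]
end

section
/- For 0 < ε ≤ 1, 0 ≤ α ≤ 1 and positive reals T₁, T₂: ε ln(α T₁ + (1−α) T₂) + ln(ε(1−α) T₁ + (1 − ε(1−α)) T₂) ≥ ε ln T₁ + ln T₂. -/
lemma log_concave_aux {a x y : ℝ} (ha0 : 0 ≤ a) (ha1 : a ≤ 1)
    (hx : 0 < x) (hy : 0 < y) :
    a * Real.log x + (1 - a) * Real.log y ≤ Real.log (a * x + (1 - a) * y) := by
  have h := strictConcaveOn_log_Ioi.concaveOn.2 (Set.mem_Ioi.mpr hx)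
    (Set.mem_Ioi.mpr hy) ha0 (by linarith : (0:ℝ) ≤ 1 - a) (by ring)
  simpa using h

theorem log_concavity_estimate
    (ε α T₁ T₂ : ℝ)
    (hε : 0 < ε) (hε1 : ε ≤ 1)
    (hα0 : 0 ≤ α) (hα1 : α ≤ 1)
    (hT₁ : 0 < T₁) (hT₂ : 0 < T₂) :
    ε * Real.log T₁ + Real.log T₂ ≤
      ε * Real.log (α * T₁ + (1 - α) * T₂) +
        Real.log (ε * (1 - α) * T₁ + (1 - ε * (1 - α)) * T₂) := by
  have h1 := log_concave_aux hα0 hα1 hT₁ hT₂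
  have hb0 : 0 ≤ ε * (1 - α) := by nlinarith
  have hb1 : ε * (1 - α) ≤ 1 := by nlinarith
  have h2 := log_concave_aux hb0 hb1 hT₁ hT₂
  nlinarith [mul_le_mul_of_nonneg_left h1 hε.le]
end

section
/- Let f : ℝ³ → ℝ>0 and M : ℝ³ → ℝ>0 be integrable with ∫ M dv = ∫ f dv and with f ln f, M ln M integrable. Then ∫ (ln f)(M − f) dv ≤ ∫ M ln M dv − ∫ f ln f dv, with equality if and only if f = M almost everywhere. -/
open MeasureTheory

lemma entropy_ptwise {a b : ℝ} (ha : 0 < a) (hb : 0 < b) :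
    Real.log a * (b - a) ≤ b * Real.log b - a * Real.log a + a - b := by
  have hlog : Real.log a - Real.log b ≤ a / b - 1 := by
    rw [← Real.log_div ha.ne' hb.ne']
    exact Real.log_le_sub_one_of_pos (div_pos ha hb)
  have h2 : b * (Real.log a - Real.log b) ≤ b * (a / b - 1) :=
    mul_le_mul_of_nonneg_left hlog hb.le
  have h3 : b * (a / b - 1) = a - b := by field_simp
  nlinarith [h2, h3]

lemma entropy_ptwise_strict {a b : ℝ} (ha : 0 < a) (hb : 0 < b) (hne : a ≠ b) :
    Real.log a * (b - a) < b * Real.log b - a * Real.log a + a - b := by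
  have hdiv : a / b ≠ 1 := by
    intro h
    exact hne (by field_simp at h; linarith)
  have hlog : Real.log a - Real.log b < a / b - 1 := by
    rw [← Real.log_div ha.ne' hb.ne']
    exact Real.log_lt_sub_one_of_pos (div_pos ha hb) hdiv
  have h2 : b * (Real.log a - Real.log b) < b * (a / b - 1) :=
    (mul_lt_mul_iff_right₀ hb).2 hlog
  have h3 : b * (a / b - 1) = a - b := by field_simp
  nlinarith [h2, h3]

theorem entropy_dissipation_step
    (f M : EuclideanSpace ℝ (Fin 3) → ℝ)
    (hf : ∀ v, 0 < f v) (hM : ∀ v, 0 < M v)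
    (hf_int : Integrable f) (hM_int : Integrable M)
    (hf_ent : Integrable (fun v => f v * Real.log (f v)))
    (hM_ent : Integrable (fun v => M v * Real.log (M v)))
    (hS_int : Integrable (fun v => Real.log (f v) * (M v - f v)))
    (h0 : (∫ v, M v) = ∫ v, f v) :
    (∫ v, Real.log (f v) * (M v - f v)) ≤
      (∫ v, M v * Real.log (M v)) - ∫ v, f v * Real.log (f v) ∧
    ((∫ v, Real.log (f v) * (M v - f v)) =
        (∫ v, M v * Real.log (M v)) - (∫ v, f v * Real.log (f v)) ↔
      f =ᵐ[volume] M) := by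
  set H : EuclideanSpace ℝ (Fin 3) → ℝ := fun v =>
    (((M v * Real.log (M v) - f v * Real.log (f v)) + f v) - M v)
      - Real.log (f v) * (M v - f v) with hH
  have hH_nonneg : ∀ v, 0 ≤ H v := by
    intro v
    have := entropy_ptwise (hf v) (hM v)
    simp only [hH]
    linarith
  have hH_int : Integrable H :=
    (((hM_ent.sub hf_ent).add hf_int).sub hM_int).sub hS_int
  have hH_integral : (∫ v, H v) =
      ((∫ v, M v * Real.log (M v)) - ∫ v, f v * Real.log (f v))
        - ∫ v, Real.log (f v) * (M v - f v) := by
    simp only [hH]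
    have h1 : Integrable (fun v => M v * Real.log (M v) - f v * Real.log (f v)) :=
      hM_ent.sub hf_ent
    have h2 : Integrable
        (fun v => (M v * Real.log (M v) - f v * Real.log (f v)) + f v) := h1.add hf_int
    have h3 : Integrable
        (fun v => ((M v * Real.log (M v) - f v * Real.log (f v)) + f v) - M v) :=
      h2.sub hM_int
    rw [integral_sub h3 hS_int, integral_sub h2 hM_int, integral_add h1 hf_int,
      integral_sub hM_ent hf_ent, h0]
    ring
  have hnn : 0 ≤ ∫ v, H v := integral_nonneg hH_nonneg
  constructor
  · linarith [hH_integral ▸ hnn]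
  · rw [show ((∫ v, Real.log (f v) * (M v - f v)) =
        (∫ v, M v * Real.log (M v)) - (∫ v, f v * Real.log (f v))) ↔
        (∫ v, H v) = 0 by rw [hH_integral]; constructor <;> intro h <;> linarith]
    rw [integral_eq_zero_iff_of_nonneg hH_nonneg hH_int]
    constructor
    · intro h
      filter_upwards [h] with v hv
      by_contra hne
      have := entropy_ptwise_strict (hf v) (hM v) hne
      simp only [hH, Pi.zero_apply] at hv
      linarith
    · intro h
      filter_upwards [h] with v hv
      simp only [hH, Pi.zero_apply, hv]
      ring
end

section
/- In Hamel's model, the choices ε = 1, δ = m₁/(m₁+m₂), α = (m₁² + m₂²)/(m₁+m₂)², γ = (m₁ m₂/(m₁+m₂)²)(m₂/3) satisfy the positivity conditions: α ≥ 1 − 1/ε = 0, α ∈ [0,1], γ ≥ 0, and γ ≤ (m₁/3)(1−δ)[(1 + (m₁/m₂)ε)δ + 1 − (m₁/m₂)ε]. -/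
theorem hamel_model_conditions
    (m₁ m₂ : ℝ) (hm₁ : 0 < m₁) (hm₂ : 0 < m₂)
    (ε δ α γ : ℝ)
    (hε : ε = 1)
    (hδ : δ = m₁ / (m₁ + m₂))
    (hα : α = (m₁^2 + m₂^2) / (m₁ + m₂)^2)
    (hγ : γ = (m₁ * m₂ / (m₁ + m₂)^2) * (m₂ / 3)) :
    1 - 1/ε ≤ α ∧ 0 ≤ α ∧ α ≤ 1 ∧ 0 ≤ γ ∧
    γ ≤ (m₁ / 3) * (1 - δ) * ((1 + (m₁ / m₂) * ε) * δ + 1 - (m₁ / m₂) * ε) := by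
  have hs : 0 < m₁ + m₂ := by linarith
  subst hε hδ hα hγ
  refine ⟨by norm_num; positivity, by positivity, ?_, by positivity, ?_⟩
  · rw [div_le_one (by positivity)]; nlinarith
  · rw [show (1:ℝ) - m₁ / (m₁ + m₂) = m₂ / (m₁ + m₂) by field_simp; ring,
      show (1 + m₁ / m₂ * 1) * (m₁ / (m₁ + m₂)) + 1 - m₁ / m₂ * 1 = 1 by
        field_simp; ring]
    rw [mul_one, div_mul_div_comm, div_mul_div_comm,
      div_le_div_iff₀ (by positivity) (by positivity)]
    nlinarith [mul_pos (mul_pos hm₁ hm₂) hm₁, mul_pos (mul_pos hm₁ hm₂) hm₂,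
      mul_pos (mul_pos (mul_pos hm₁ hm₂) hm₂) hm₁,
      mul_pos (mul_pos (mul_pos hm₁ hm₂) hm₂) hm₂]
end
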